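/- arXiv:1509.03745 — 2 statements merged into one kernel-verified Lean document; each statement's English description precedes it below -/
import Mathlib

section
/- Let Q be as in the context and fix a real number b. Then the function a ↦ ψ(a,b) is differentiable on (−∞, b), and its derivative at every a < b equals −(1/2)·φ(a,b). -/
open MeasureTheory intervalIntegral

open MeasureTheory intervalIntegral Set

private lemma meas_sqrt_ratio : Measurable fun t : ℝ => Real.sqrt ((1 - t) / t) :=
  Real.continuous_sqrt.measurable.comp ((measurable_const.sub measurable_id).div measurable_id)

private lemma meas_sqrt_prod : Measurable fun t : ℝ => Real.sqrt (t * (1 - t)) :=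
  Real.continuous_sqrt.measurable.comp (measurable_id.mul (measurable_const.sub measurable_id))

/-- `f(t)·√((1−t)/t)` is interval integrable on `[0,1]` for continuous `f`. -/
private lemma intB (f : ℝ → ℝ) (hf : Continuous f) :
    IntervalIntegrable (fun t => f t * Real.sqrt ((1 - t) / t)) volume 0 1 := by
  obtain ⟨C, hC⟩ := (isCompact_Icc (a := (0:ℝ)) (b := 1)).exists_bound_of_continuousOn
    hf.continuousOn
  have hC0 : 0 ≤ C := le_trans (norm_nonneg _) (hC 0 ⟨le_refl 0, by norm_num⟩)
  refine IntervalIntegrable.mono_fun'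
    (g := fun t => C * t ^ (-(1/2) : ℝ))
    ((intervalIntegrable_rpow' (by norm_num)).const_mul C)
    ((hf.measurable.mul meas_sqrt_ratio).aestronglyMeasurable) ?_
  refine (ae_restrict_iff' measurableSet_uIoc).2 (Filter.Eventually.of_forall fun t ht => ?_)
  rw [Set.uIoc_of_le (by norm_num : (0:ℝ) ≤ 1)] at ht
  have h1 : (0:ℝ) < t := ht.1
  have h2 : t ≤ 1 := ht.2
  have hpow : t ^ (-(1/2) : ℝ) = Real.sqrt (1 / t) := by
    rw [Real.rpow_neg h1.le, ← Real.sqrt_eq_rpow, one_div, Real.sqrt_inv]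
  have hle1 : Real.sqrt ((1 - t) / t) ≤ Real.sqrt (1 / t) := by
    apply Real.sqrt_le_sqrt
    gcongr
    linarith
  calc ‖f t * Real.sqrt ((1 - t) / t)‖
      = ‖f t‖ * Real.sqrt ((1 - t) / t) := by
        rw [norm_mul, Real.norm_eq_abs (Real.sqrt _), abs_of_nonneg (Real.sqrt_nonneg _)]
    _ ≤ C * Real.sqrt (1 / t) := by
        apply mul_le_mul (hC t ⟨h1.le, h2⟩) hle1 (Real.sqrt_nonneg _) hC0
    _ = C * t ^ (-(1/2) : ℝ) := by rw [hpow]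

/-- `f(t)/√(t(1−t))` is interval integrable on `[0,1]` for continuous `f`. -/
private lemma intA (f : ℝ → ℝ) (hf : Continuous f) :
    IntervalIntegrable (fun t => f t / Real.sqrt (t * (1 - t))) volume 0 1 := by
  obtain ⟨C, hC⟩ := (isCompact_Icc (a := (0:ℝ)) (b := 1)).exists_bound_of_continuousOn
    hf.continuousOn
  have hC0 : 0 ≤ C := le_trans (norm_nonneg _) (hC 0 ⟨le_refl 0, by norm_num⟩)
  have hmeas : AEStronglyMeasurable (fun t => f t / Real.sqrt (t * (1 - t)))
      (volume.restrict (Set.uIoc (0:ℝ) (1/2))) :=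
    (hf.measurable.div meas_sqrt_prod).aestronglyMeasurable
  have hmeas' : AEStronglyMeasurable (fun t => f t / Real.sqrt (t * (1 - t)))
      (volume.restrict (Set.uIoc (1/2:ℝ) 1)) :=
    (hf.measurable.div meas_sqrt_prod).aestronglyMeasurable
  have half1 : IntervalIntegrable (fun t => f t / Real.sqrt (t * (1 - t))) volume 0 (1/2) := by
    refine IntervalIntegrable.mono_fun'
      (g := fun t => (C * Real.sqrt 2) * t ^ (-(1/2) : ℝ))
      ((intervalIntegrable_rpow' (by norm_num)).const_mul _) hmeas ?_
    refine (ae_restrict_iff' measurableSet_uIoc).2 (Filter.Eventually.of_forall fun t ht => ?_)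
    rw [Set.uIoc_of_le (by norm_num : (0:ℝ) ≤ 1/2)] at ht
    have h1 : (0:ℝ) < t := ht.1
    have h2 : t ≤ 1/2 := ht.2
    have hst : 0 < Real.sqrt (t * (1 - t)) := Real.sqrt_pos.2 (by nlinarith)
    have hsts : 0 < Real.sqrt t := Real.sqrt_pos.2 h1
    have hpow : t ^ (-(1/2) : ℝ) = (Real.sqrt t)⁻¹ := by
      rw [Real.rpow_neg h1.le, ← Real.sqrt_eq_rpow]
    have key : Real.sqrt t ≤ Real.sqrt 2 * Real.sqrt (t * (1 - t)) := by
      rw [← Real.sqrt_mul (by norm_num : (0:ℝ) ≤ 2)]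
      exact Real.sqrt_le_sqrt (by nlinarith)
    calc ‖f t / Real.sqrt (t * (1 - t))‖
        = ‖f t‖ / Real.sqrt (t * (1 - t)) := by
          rw [norm_div, Real.norm_eq_abs (Real.sqrt _), abs_of_nonneg (Real.sqrt_nonneg _)]
      _ ≤ C / Real.sqrt (t * (1 - t)) := by gcongr; exact hC t ⟨h1.le, by linarith⟩
      _ ≤ (C * Real.sqrt 2) / Real.sqrt t := by
          rw [div_le_div_iff₀ hst hsts]
          nlinarith [mul_le_mul_of_nonneg_left key hC0]
      _ = (C * Real.sqrt 2) * t ^ (-(1/2) : ℝ) := by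
          rw [hpow, div_eq_mul_inv, ← Real.sqrt_inv]
  have half2 : IntervalIntegrable (fun t => f t / Real.sqrt (t * (1 - t))) volume (1/2) 1 := by
    have base : IntervalIntegrable (fun x : ℝ => (1 - x) ^ (-(1/2) : ℝ)) volume (1/2) 1 := by
      have := (intervalIntegrable_rpow' (a := 0) (b := 1/2)
        (by norm_num : (-1:ℝ) < -(1/2))).comp_sub_left 1
      norm_num at this
      exact this.symm
    refine IntervalIntegrable.mono_fun'
      (g := fun t => (C * Real.sqrt 2) * (1 - t) ^ (-(1/2) : ℝ))
      (base.const_mul _) hmeas' ?_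
    refine (ae_restrict_iff' measurableSet_uIoc).2 (Filter.Eventually.of_forall fun t ht => ?_)
    rw [Set.uIoc_of_le (by norm_num : (1/2:ℝ) ≤ 1)] at ht
    have h1 : (1/2:ℝ) < t := ht.1
    have h2 : t ≤ 1 := ht.2
    rcases eq_or_lt_of_le h2 with h2e | h2l
    · subst h2e
      simp [Real.zero_rpow (by norm_num : (-(1/2):ℝ) ≠ 0)]
    · have hst : 0 < Real.sqrt (t * (1 - t)) := Real.sqrt_pos.2 (by nlinarith)
      have hsts : 0 < Real.sqrt (1 - t) := Real.sqrt_pos.2 (by linarith)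
      have hpow : (1 - t) ^ (-(1/2) : ℝ) = (Real.sqrt (1 - t))⁻¹ := by
        rw [Real.rpow_neg (by linarith), ← Real.sqrt_eq_rpow]
      have key : Real.sqrt (1 - t) ≤ Real.sqrt 2 * Real.sqrt (t * (1 - t)) := by
        rw [← Real.sqrt_mul (by norm_num : (0:ℝ) ≤ 2)]
        exact Real.sqrt_le_sqrt (by nlinarith)
      calc ‖f t / Real.sqrt (t * (1 - t))‖
          = ‖f t‖ / Real.sqrt (t * (1 - t)) := by
            rw [norm_div, Real.norm_eq_abs (Real.sqrt _), abs_of_nonneg (Real.sqrt_nonneg _)]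
        _ ≤ C / Real.sqrt (t * (1 - t)) := by gcongr; exact hC t ⟨by linarith, h2⟩
        _ ≤ (C * Real.sqrt 2) / Real.sqrt (1 - t) := by
            rw [div_le_div_iff₀ hst hsts]
            nlinarith [mul_le_mul_of_nonneg_left key hC0]
        _ = (C * Real.sqrt 2) * (1 - t) ^ (-(1/2) : ℝ) := by
            rw [hpow, div_eq_mul_inv]
  exact half1.trans half2

private lemma sqrt_helper {t : ℝ} (h1 : 0 < t) (h2 : t ≤ 1) :
    t * Real.sqrt ((1 - t) / t) = Real.sqrt (t * (1 - t)) := by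
  have hst : Real.sqrt t ≠ 0 := (Real.sqrt_pos.2 h1).ne'
  have ht2 : Real.sqrt t * Real.sqrt t = t := Real.mul_self_sqrt h1.le
  rw [Real.sqrt_div (by linarith : (0:ℝ) ≤ 1 - t) t, Real.sqrt_mul h1.le]
  field_simp
  nlinarith [Real.sqrt_nonneg (1 - t), Real.sqrt_nonneg t]

private lemma sqrt_ratio_eq {t : ℝ} (h1 : 0 < t) (h2 : t < 1) :
    Real.sqrt ((1 - t) / t) = (1 - t) / Real.sqrt (t * (1 - t)) := by
  have hprod : 0 < t * (1 - t) := by nlinarith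
  have hs0 : Real.sqrt (t * (1 - t)) ≠ 0 := (Real.sqrt_pos.2 hprod).ne'
  have hmul : ((1 - t) / t) * (t * (1 - t)) = (1 - t) ^ 2 := by field_simp
  rw [eq_div_iff hs0, ← Real.sqrt_mul (div_nonneg (by linarith) h1.le), hmul,
    Real.sqrt_sq (by linarith)]

/-- Differentiation under the integral sign. -/
private lemma hasDerivAt_I (p : Polynomial ℝ) (b a : ℝ) :
    HasDerivAt (fun s => ∫ t in (0:ℝ)..1, p.eval ((1 - t) * b + t * s) * Real.sqrt ((1 - t) / t))
      (∫ t in (0:ℝ)..1, p.derivative.eval ((1 - t) * b + t * a) * t * Real.sqrt ((1 - t) / t))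
      a := by
  set R : ℝ := |a| + |b| + 1 with hR
  have hR0 : (0:ℝ) ≤ R := by positivity
  obtain ⟨M, hM⟩ := (isCompact_Icc (a := -R) (b := R)).exists_bound_of_continuousOn
    (Polynomial.continuous p.derivative).continuousOn
  have key := intervalIntegral.hasDerivAt_integral_of_dominated_loc_of_deriv_le
    (μ := volume) (a := 0) (b := 1) (x₀ := a) (s := Metric.ball a 1)
    (F := fun x t => p.eval ((1 - t) * b + t * x) * Real.sqrt ((1 - t) / t))
    (F' := fun x t => p.derivative.eval ((1 - t) * b + t * x) * t * Real.sqrt ((1 - t) / t))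
    (bound := fun _ => M) (Metric.ball_mem_nhds a one_pos)
    (Filter.Eventually.of_forall fun x =>
      (((Polynomial.continuous p).comp (by continuity)).measurable.mul
        meas_sqrt_ratio).aestronglyMeasurable)
    (intB _ ((Polynomial.continuous p).comp (by continuity)))
    ((((Polynomial.continuous p.derivative).comp (by continuity)).measurable.mul
        measurable_id).mul meas_sqrt_ratio).aestronglyMeasurable
    ?_ intervalIntegrable_const ?_
  · exact key.2
  · -- bound
    refine Filter.Eventually.of_forall fun t ht x hx => ?_
    rw [Set.uIoc_of_le (zero_le_one' ℝ)] at ht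
    rw [Metric.mem_ball, Real.dist_eq] at hx
    have hx' : |x| < |a| + 1 := by
      have := abs_sub_abs_le_abs_sub x a
      linarith
    have hw : |(1 - t) * b + t * x| ≤ R := by
      have h1 := abs_add_le ((1 - t) * b) (t * x)
      rw [abs_mul, abs_mul, abs_of_nonneg (by linarith [ht.2] : (0:ℝ) ≤ 1 - t),
        abs_of_nonneg ht.1.le] at h1
      nlinarith [abs_nonneg b, abs_nonneg x, mul_nonneg ht.1.le (abs_nonneg b),
        mul_nonneg (by linarith [ht.2] : (0:ℝ) ≤ 1 - t) (abs_nonneg x), ht.1.le, ht.2]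
    have hM0 : 0 ≤ M := le_trans (norm_nonneg _) (hM 0 (by constructor <;> linarith))
    have hMw := hM ((1 - t) * b + t * x) (abs_le.1 hw)
    have hsle : Real.sqrt (t * (1 - t)) ≤ 1 := by
      have := Real.sqrt_le_sqrt (show t * (1 - t) ≤ 1 by nlinarith [ht.1.le, ht.2])
      simpa using this
    calc ‖p.derivative.eval ((1 - t) * b + t * x) * t * Real.sqrt ((1 - t) / t)‖
        = ‖p.derivative.eval ((1 - t) * b + t * x)‖ * (t * Real.sqrt ((1 - t) / t)) := by
          rw [Real.norm_eq_abs, abs_mul, abs_mul, abs_of_nonneg ht.1.le,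
            abs_of_nonneg (Real.sqrt_nonneg _), Real.norm_eq_abs, mul_assoc]
      _ = ‖p.derivative.eval ((1 - t) * b + t * x)‖ * Real.sqrt (t * (1 - t)) := by
          rw [sqrt_helper ht.1 ht.2]
      _ ≤ M * 1 := mul_le_mul hMw hsle (Real.sqrt_nonneg _) hM0
      _ = M := mul_one M
  · -- differentiability
    refine Filter.Eventually.of_forall fun t ht x hx => ?_
    have hlin : HasDerivAt (fun x : ℝ => (1 - t) * b + t * x) t x := by
      simpa using ((hasDerivAt_id x).const_mul t).const_add ((1 - t) * b)
    have hcomp := (Polynomial.hasDerivAt p ((1 - t) * b + t * x)).comp x hlin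
    have h' : HasDerivAt (fun y : ℝ => p.eval ((1 - t) * b + t * y))
        (p.derivative.eval ((1 - t) * b + t * x) * t) x := by
      exact hcomp
    exact h'.mul_const _

/-- FTC: the combined integrand is the derivative of `-(p(u(t))·√(t(1−t)))`, so it integrates
to zero. -/
private lemma ftc_zero (p : Polynomial ℝ) (a b : ℝ) :
    ∫ t in (0:ℝ)..1,
      ((b - a) * (p.derivative.eval ((1 - t) * b + t * a) * t * Real.sqrt ((1 - t) / t))
        - p.eval ((1 - t) * b + t * a) * Real.sqrt ((1 - t) / t)
        + (1 / 2) * (p.eval ((1 - t) * b + t * a) / Real.sqrt (t * (1 - t)))) = 0 := by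
  have hcontu : Continuous fun t : ℝ => (1 - t) * b + t * a := by continuity
  have hcont1 : Continuous fun t : ℝ => p.eval ((1 - t) * b + t * a) :=
    (Polynomial.continuous p).comp hcontu
  have hA1 := intB (fun t => p.derivative.eval ((1 - t) * b + t * a) * t)
    (((Polynomial.continuous p.derivative).comp hcontu).mul continuous_id)
  have hA2 := intB _ hcont1
  have hA3 := intA _ hcont1
  have hGint := ((hA1.const_mul (b - a)).sub hA2).add (hA3.const_mul (1 / 2))
  have hg_cont : Continuous fun t : ℝ => -(p.eval ((1 - t) * b + t * a)
      * Real.sqrt (t * (1 - t))) :=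
    (hcont1.mul (Real.continuous_sqrt.comp (by continuity))).neg
  have hderiv : ∀ t ∈ Set.Ioo (0:ℝ) 1,
      HasDerivWithinAt (fun t : ℝ => -(p.eval ((1 - t) * b + t * a) * Real.sqrt (t * (1 - t))))
        ((b - a) * (p.derivative.eval ((1 - t) * b + t * a) * t * Real.sqrt ((1 - t) / t))
          - p.eval ((1 - t) * b + t * a) * Real.sqrt ((1 - t) / t)
          + (1 / 2) * (p.eval ((1 - t) * b + t * a) / Real.sqrt (t * (1 - t))))
        (Set.Ioi t) t := by
    intro t ht
    obtain ⟨h1, h2⟩ := ht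
    have hprod : 0 < t * (1 - t) := by nlinarith
    have hs0 : Real.sqrt (t * (1 - t)) ≠ 0 := (Real.sqrt_pos.2 hprod).ne'
    have hs2 : Real.sqrt (t * (1 - t)) * Real.sqrt (t * (1 - t)) = t * (1 - t) :=
      Real.mul_self_sqrt hprod.le
    have hlin : HasDerivAt (fun t : ℝ => (1 - t) * b + t * a) (a - b) t := by
      have h := (((hasDerivAt_id t).const_sub 1).mul_const b).add ((hasDerivAt_id t).mul_const a)
      have h' : HasDerivAt (fun t : ℝ => (1 - t) * b + t * a) (-b + a) t := h.congr_deriv (by ring)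
      exact (show (-b + a : ℝ) = a - b by ring) ▸ h'
    have hp : HasDerivAt (fun t : ℝ => p.eval ((1 - t) * b + t * a))
        (p.derivative.eval ((1 - t) * b + t * a) * (a - b)) t := by
      exact (Polynomial.hasDerivAt p ((1 - t) * b + t * a)).comp t hlin
    have hq : HasDerivAt (fun t : ℝ => t * (1 - t)) (1 - 2 * t) t := by
      have h := (hasDerivAt_id t).mul ((hasDerivAt_id t).const_sub 1)
      have h' : HasDerivAt (fun t : ℝ => t * (1 - t)) (1 - t + -t) t := h.congr_deriv (by simp only [id]; ring)
      exact (show (1 - t + -t : ℝ) = 1 - 2 * t by ring) ▸ h'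
    have hsq : HasDerivAt (fun t : ℝ => Real.sqrt (t * (1 - t)))
        ((1 - 2 * t) / (2 * Real.sqrt (t * (1 - t)))) t := by
      have h' : HasDerivAt (fun t : ℝ => Real.sqrt (t * (1 - t)))
          (1 / (2 * Real.sqrt (t * (1 - t))) * (1 - 2 * t)) t := by
        exact (Real.hasDerivAt_sqrt hprod.ne').comp t hq
      have e : 1 / (2 * Real.sqrt (t * (1 - t))) * (1 - 2 * t)
          = (1 - 2 * t) / (2 * Real.sqrt (t * (1 - t))) := by ring
      rwa [e] at h'
    have hg := (hp.mul hsq).neg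
    have hval : -(p.derivative.eval ((1 - t) * b + t * a) * (a - b) * Real.sqrt (t * (1 - t))
        + p.eval ((1 - t) * b + t * a) * ((1 - 2 * t) / (2 * Real.sqrt (t * (1 - t)))))
        = (b - a) * (p.derivative.eval ((1 - t) * b + t * a) * t * Real.sqrt ((1 - t) / t))
          - p.eval ((1 - t) * b + t * a) * Real.sqrt ((1 - t) / t)
          + (1 / 2) * (p.eval ((1 - t) * b + t * a) / Real.sqrt (t * (1 - t))) := by
      rw [sqrt_ratio_eq h1 h2]
      have hspos : 0 < Real.sqrt (t * (1 - t)) := Real.sqrt_pos.2 hprod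
      generalize hS : Real.sqrt (t * (1 - t)) = S at hs0 hs2 hspos ⊢
      field_simp
      linear_combination (2 * (b - a) *
        Polynomial.eval ((1 - t) * b + t * a) (Polynomial.derivative p)) * hs2
    exact (hval ▸ hg).hasDerivWithinAt
  have hFTC := intervalIntegral.integral_eq_sub_of_hasDeriv_right_of_le zero_le_one
    hg_cont.continuousOn hderiv hGint
  rw [hFTC]
  norm_num


/-- `φ(a,b) = ∫₀¹ Q'((1−t)b + t·a)/√(t(1−t)) dt`. -/
noncomputable def phi (Q : Polynomial ℝ) (a b : ℝ) : ℝ :=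
  ∫ t in (0:ℝ)..1, Q.derivative.eval ((1 - t) * b + t * a) / Real.sqrt (t * (1 - t))

/-- `ψ(a,b) = (b−a)·∫₀¹ Q'((1−t)b + t·a)·√((1−t)/t) dt − 2π`. -/
noncomputable def psi (Q : Polynomial ℝ) (a b : ℝ) : ℝ :=
  (b - a) * (∫ t in (0:ℝ)..1, Q.derivative.eval ((1 - t) * b + t * a) * Real.sqrt ((1 - t) / t))
    - 2 * Real.pi


/-- For fixed `b`, the map `a ↦ ψ(a,b)` is differentiable on `(−∞, b)` with derivative
`−(1/2)·φ(a,b)` at every `a < b`. -/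
theorem hasDerivAt_psi_left (Q : Polynomial ℝ) (m : ℕ) (hm : 1 ≤ m)
    (hdeg : Q.natDegree = 2 * m) (hlead : 0 < Q.leadingCoeff)
    (hconv : ∀ x : ℝ, 0 ≤ Q.derivative.derivative.eval x) (b : ℝ) :
    ∀ a ∈ Set.Iio b, HasDerivAt (fun s => psi Q s b) (-(1 / 2) * phi Q a b) a := by
  intro a _
  have hcontu : Continuous fun t : ℝ => (1 - t) * b + t * a := by continuity
  have hcont1 : Continuous fun t : ℝ => Q.derivative.eval ((1 - t) * b + t * a) :=
    (Polynomial.continuous Q.derivative).comp hcontu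
  have hA1 := intB (fun t => Q.derivative.derivative.eval ((1 - t) * b + t * a) * t)
    (((Polynomial.continuous Q.derivative.derivative).comp hcontu).mul continuous_id)
  have hA2 := intB _ hcont1
  have hA3 := intA _ hcont1
  have h0 := ftc_zero Q.derivative a b
  rw [intervalIntegral.integral_add ((hA1.const_mul (b - a)).sub hA2) (hA3.const_mul (1 / 2)),
    intervalIntegral.integral_sub (hA1.const_mul (b - a)) hA2,
    intervalIntegral.integral_const_mul, intervalIntegral.integral_const_mul] at h0
  have hI := hasDerivAt_I Q.derivative b a
  have hlin : HasDerivAt (fun s : ℝ => b - s) (-1 : ℝ) a := by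
    simpa using (hasDerivAt_id a).const_sub b
  have hD : HasDerivAt
      (fun s : ℝ => (b - s) * (∫ t in (0:ℝ)..1,
          Q.derivative.eval ((1 - t) * b + t * s) * Real.sqrt ((1 - t) / t)) - 2 * Real.pi)
      ((-1) * (∫ t in (0:ℝ)..1,
          Q.derivative.eval ((1 - t) * b + t * a) * Real.sqrt ((1 - t) / t))
        + (b - a) * (∫ t in (0:ℝ)..1,
          Q.derivative.derivative.eval ((1 - t) * b + t * a) * t * Real.sqrt ((1 - t) / t))) a :=
    (hlin.mul hI).sub_const (2 * Real.pi)
  have hval : -(1 / 2) * phi Q a b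
      = (-1) * (∫ t in (0:ℝ)..1,
          Q.derivative.eval ((1 - t) * b + t * a) * Real.sqrt ((1 - t) / t))
        + (b - a) * (∫ t in (0:ℝ)..1,
          Q.derivative.derivative.eval ((1 - t) * b + t * a) * t * Real.sqrt ((1 - t) / t)) := by
    unfold phi
    linarith
  rw [hval]
  exact hD
end

section
/- Let Q be as in the context. Then there exist real numbers a < b such that ψ(a,b) = 0 and φ(a,b) ≥ 0. In other words, the set {a ∈ ℝ : φ(a, b(a)) ≥ 0}, where b(a) denotes the unique b > a with ψ(a,b) = 0, is nonempty. -/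
open MeasureTheory intervalIntegral

private lemma sqrt_term_le {t : ℝ} (ht : t ∈ Set.Ioc (0:ℝ) 1) :
    Real.sqrt ((1 - t) / t) ≤ t ^ (-(1/2) : ℝ) := by
  have h1 : (1 - t) / t ≤ t⁻¹ := by
    rw [div_le_iff₀ ht.1, inv_mul_cancel₀ ht.1.ne']
    linarith [ht.1]
  calc Real.sqrt ((1 - t) / t) ≤ Real.sqrt t⁻¹ := Real.sqrt_le_sqrt h1
    _ = t ^ (-(1/2) : ℝ) := by
        rw [Real.sqrt_inv, Real.sqrt_eq_rpow, ← Real.rpow_neg ht.1.le]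

private lemma arg_mem {t b c R : ℝ} (ht : 0 ≤ t) (ht1 : t ≤ 1) (hb : |b| ≤ R) (hc : |c| ≤ R) :
    (1 - t) * b + t * c ∈ Set.Icc (-R) R := by
  have h1 := abs_add_le ((1 - t) * b) (t * c)
  rw [abs_mul, abs_mul, abs_of_nonneg (by linarith : (0:ℝ) ≤ 1 - t), abs_of_nonneg ht] at h1
  have hR : 0 ≤ R := (abs_nonneg b).trans hb
  constructor <;> nlinarith [abs_nonneg ((1-t)*b + t*c), le_abs_self ((1-t)*b + t*c),
    neg_abs_le ((1-t)*b + t*c)]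

private lemma aux_meas (P : Polynomial ℝ) (c b : ℝ) :
    AEStronglyMeasurable (fun t : ℝ => P.eval ((1 - t) * b + t * c) * Real.sqrt ((1 - t) / t))
      (volume.restrict (Set.uIoc (0:ℝ) 1)) := by
  rw [Set.uIoc_of_le (zero_le_one (α := ℝ))]
  apply ContinuousOn.aestronglyMeasurable _ measurableSet_Ioc
  apply ContinuousOn.mul
  · exact (P.continuous.comp (by continuity)).continuousOn
  · exact Real.continuous_sqrt.comp_continuousOn
      (ContinuousOn.div (by fun_prop) continuousOn_id (fun t ht => ht.1.ne'))

private lemma aux_bound (P : Polynomial ℝ) {c b R M : ℝ} (hb : |b| ≤ R) (hc : |c| ≤ R)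
    (hM : ∀ x ∈ Set.Icc (-R) R, ‖P.eval x‖ ≤ M) {t : ℝ} (ht : t ∈ Set.Ioc (0:ℝ) 1) :
    ‖P.eval ((1 - t) * b + t * c) * Real.sqrt ((1 - t) / t)‖ ≤ M * t ^ (-(1/2) : ℝ) := by
  rw [norm_mul, Real.norm_eq_abs (Real.sqrt _), abs_of_nonneg (Real.sqrt_nonneg _)]
  have hR0 : 0 ≤ R := (abs_nonneg b).trans hb
  exact mul_le_mul (hM _ (arg_mem ht.1.le ht.2 hb hc)) (sqrt_term_le ht)
    (Real.sqrt_nonneg _) ((norm_nonneg _).trans (hM 0 ⟨by linarith, hR0⟩))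

private lemma bound_intable (M : ℝ) :
    IntervalIntegrable (fun t : ℝ => M * t ^ (-(1/2) : ℝ)) volume 0 1 :=
  (intervalIntegral.intervalIntegrable_rpow' (by norm_num)).const_mul M

private lemma aux_intable (P : Polynomial ℝ) (c b : ℝ) :
    IntervalIntegrable (fun t : ℝ => P.eval ((1 - t) * b + t * c) * Real.sqrt ((1 - t) / t))
      volume 0 1 := by
  set R := |b| + |c| with hR
  obtain ⟨M, hM⟩ := (isCompact_Icc (a := -R) (b := R)).exists_bound_of_continuousOn
    P.continuous.continuousOn
  apply (bound_intable M).mono_fun (aux_meas P c b)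
  rw [Set.uIoc_of_le (zero_le_one (α := ℝ))]
  refine (ae_restrict_iff' measurableSet_Ioc).mpr (ae_of_all _ fun t ht => ?_)
  have h := aux_bound P (le_add_of_nonneg_right (abs_nonneg c) : |b| ≤ R)
    (le_add_of_nonneg_left (abs_nonneg b) : |c| ≤ R) hM ht
  exact h.trans (le_abs_self _)

private lemma aux_cont (P : Polynomial ℝ) (c : ℝ) :
    Continuous (fun b => ∫ t in (0:ℝ)..1,
      P.eval ((1 - t) * b + t * c) * Real.sqrt ((1 - t) / t)) := by
  refine continuous_iff_continuousAt.mpr fun b₀ => ?_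
  set R := |b₀| + 1 + |c| with hRdef
  obtain ⟨M, hM⟩ := (isCompact_Icc (a := -R) (b := R)).exists_bound_of_continuousOn
    P.continuous.continuousOn
  apply intervalIntegral.continuousAt_of_dominated_interval
    (bound := fun t => M * t ^ (-(1/2) : ℝ))
  · exact Filter.Eventually.of_forall fun b => aux_meas P c b
  · have hmem : Set.Ioo (b₀ - 1) (b₀ + 1) ∈ nhds b₀ :=
      Ioo_mem_nhds (by linarith) (by linarith)
    refine Filter.eventually_of_mem hmem fun b hb => ae_of_all _ fun t ht => ?_
    rw [Set.uIoc_of_le (zero_le_one (α := ℝ))] at ht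
    rw [Set.mem_Ioo] at hb
    have hbR : |b| ≤ R := by
      rw [hRdef]
      have h1 := neg_abs_le b₀
      have h2 := le_abs_self b₀
      have h3 := abs_nonneg c
      rw [abs_le]
      constructor <;> [linarith [hb.1]; linarith [hb.2]]
    have hcR : |c| ≤ R := by
      rw [hRdef]; linarith [abs_nonneg b₀]
    exact aux_bound P hbR hcR hM ht
  · exact bound_intable M
  · refine ae_of_all _ fun t _ => ?_
    exact ((P.continuous.comp (by continuity)).mul continuous_const).continuousAt

/-- There exist `a < b` with `ψ(a,b) = 0` and `φ(a,b) ≥ 0`. -/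
theorem exists_psi_eq_zero_phi_nonneg (Q : Polynomial ℝ) (m : ℕ) (hm : 1 ≤ m)
    (hdeg : Q.natDegree = 2 * m) (hlead : 0 < Q.leadingCoeff)
    (hconv : ∀ x : ℝ, 0 ≤ Q.derivative.derivative.eval x) :
    ∃ a b : ℝ, a < b ∧ psi Q a b = 0 ∧ 0 ≤ phi Q a b := by
  set P := Q.derivative with hPdef
  have hn2 : 2 ≤ Q.natDegree := by omega
  have hcoeff : P.coeff (Q.natDegree - 1) = Q.leadingCoeff * Q.natDegree := by
    rw [hPdef, Polynomial.coeff_derivative, Nat.sub_add_cancel (by omega), Polynomial.leadingCoeff]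
    push_cast [Nat.cast_sub (by omega : 1 ≤ Q.natDegree)]
    ring
  have hcoeff_pos : 0 < P.coeff (Q.natDegree - 1) := by
    rw [hcoeff]
    exact mul_pos hlead (by exact_mod_cast (by omega : 0 < Q.natDegree))
  have hPnat : P.natDegree = Q.natDegree - 1 :=
    le_antisymm (Polynomial.natDegree_derivative_le Q)
      (Polynomial.le_natDegree_of_ne_zero hcoeff_pos.ne')
  have hPlead : 0 < P.leadingCoeff := by
    rw [Polynomial.leadingCoeff, hPnat]; exact hcoeff_pos
  have hPdegpos : 0 < P.degree :=
    Polynomial.natDegree_pos_iff_degree_pos.mp (by omega)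
  have htop := P.tendsto_atTop_of_leadingCoeff_nonneg hPdegpos hPlead.le
  obtain ⟨c, hc⟩ := Filter.eventually_atTop.mp (htop.eventually_ge_atTop 1)
  have hpi := Real.pi_pos
  set b₁ := c + 4 * Real.pi with hb₁
  have hcb₁ : c ≤ b₁ := by simp only [hb₁]; linarith
  have harg : ∀ b t : ℝ, c ≤ b → 0 ≤ t → t ≤ 1 → c ≤ (1 - t) * b + t * c := by
    intro b t hb h0 h1; nlinarith
  -- lower bound on the integral at b₁
  have hIb₁ : (1:ℝ)/2 ≤ ∫ t in (0:ℝ)..1,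
      P.eval ((1 - t) * b₁ + t * c) * Real.sqrt ((1 - t) / t) := by
    set f : ℝ → ℝ := fun t => P.eval ((1 - t) * b₁ + t * c) * Real.sqrt ((1 - t) / t) with hf
    have hint := aux_intable P c b₁
    have hsub1 : Set.uIcc (0:ℝ) (1/2) ⊆ Set.uIcc (0:ℝ) 1 := by
      rw [Set.uIcc_of_le (by norm_num : (0:ℝ) ≤ 1/2), Set.uIcc_of_le (zero_le_one (α := ℝ))]
      exact Set.Icc_subset_Icc_right (by norm_num)
    have hsub2 : Set.uIcc (1/2 : ℝ) 1 ⊆ Set.uIcc (0:ℝ) 1 := by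
      rw [Set.uIcc_of_le (by norm_num : (1/2:ℝ) ≤ 1), Set.uIcc_of_le (zero_le_one (α := ℝ))]
      exact Set.Icc_subset_Icc_left (by norm_num)
    have h1 : IntervalIntegrable f volume 0 (1/2) := hint.mono_set hsub1
    have h2 : IntervalIntegrable f volume (1/2) 1 := hint.mono_set hsub2
    have hsplit : (∫ t in (0:ℝ)..1, f t)
        = (∫ t in (0:ℝ)..(1/2), f t) + ∫ t in (1/2:ℝ)..1, f t :=
      (intervalIntegral.integral_add_adjacent_intervals h1 h2).symm
    have hlow1 : (1:ℝ)/2 ≤ ∫ t in (0:ℝ)..(1/2), f t := by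
      have hone : IntervalIntegrable (fun _ : ℝ => (1:ℝ)) volume 0 (1/2) :=
        intervalIntegrable_const
      have hmono := intervalIntegral.integral_mono_ae_restrict
        (by norm_num : (0:ℝ) ≤ 1/2) hone h1 ?_
      · simpa using hmono
      · have hvol : ∀ᵐ t : ℝ ∂volume, t ≠ 0 := by
          rw [ae_iff]
          simp only [ne_eq, not_not, Set.setOf_eq_eq_singleton]
          exact Real.volume_singleton
        have hns : ∀ᵐ t ∂(volume.restrict (Set.Icc (0:ℝ) (1/2))), t ≠ 0 :=
          ae_restrict_of_ae hvol
        filter_upwards [ae_restrict_mem measurableSet_Icc, hns] with t ht htne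
        have ht0 : 0 < t := lt_of_le_of_ne ht.1 (Ne.symm htne)
        have hP1 : 1 ≤ P.eval ((1 - t) * b₁ + t * c) :=
          hc _ (harg b₁ t hcb₁ ht0.le (by linarith [ht.2]))
        have hs1 : 1 ≤ Real.sqrt ((1 - t) / t) := by
          rw [Real.one_le_sqrt]
          rw [le_div_iff₀ ht0]
          linarith [ht.2]
        simp only [hf]
        nlinarith
    have hlow2 : (0:ℝ) ≤ ∫ t in (1/2:ℝ)..1, f t := by
      apply intervalIntegral.integral_nonneg (by norm_num)
      intro t ht
      have hP1 : 1 ≤ P.eval ((1 - t) * b₁ + t * c) :=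
        hc _ (harg b₁ t hcb₁ (by linarith [ht.1]) ht.2)
      exact mul_nonneg (by linarith) (Real.sqrt_nonneg _)
    rw [hsplit]; linarith
  -- IVT
  set g : ℝ → ℝ := fun b => psi Q c b with hgdef
  have hgc : g c = -(2 * Real.pi) := by simp [hgdef, psi]
  have hgcont : Continuous g := by
    have h := aux_cont P c
    have : g = fun b => (b - c) * (∫ t in (0:ℝ)..1,
        P.eval ((1 - t) * b + t * c) * Real.sqrt ((1 - t) / t)) - 2 * Real.pi := by
      funext b; simp [hgdef, psi, hPdef]
    rw [this]
    exact ((continuous_id.sub continuous_const).mul h).sub continuous_const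
  have hgb₁ : 0 ≤ g b₁ := by
    have : g b₁ = (b₁ - c) * (∫ t in (0:ℝ)..1,
        P.eval ((1 - t) * b₁ + t * c) * Real.sqrt ((1 - t) / t)) - 2 * Real.pi := by
      simp [hgdef, psi, hPdef]
    rw [this]
    have hb₁c : b₁ - c = 4 * Real.pi := by simp [hb₁]
    rw [hb₁c]
    nlinarith
  have h0mem : (0:ℝ) ∈ Set.Icc (g c) (g b₁) := ⟨by rw [hgc]; linarith, hgb₁⟩
  obtain ⟨b, hbmem, hb0⟩ := intermediate_value_Icc hcb₁ hgcont.continuousOn h0mem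
  have hbc : c < b := by
    rcases lt_or_eq_of_le hbmem.1 with h | h
    · exact h
    · exfalso; rw [← h, hgc] at hb0; linarith
  refine ⟨c, b, hbc, hb0, ?_⟩
  unfold phi
  apply intervalIntegral.integral_nonneg zero_le_one
  intro t ht
  apply div_nonneg _ (Real.sqrt_nonneg _)
  have := hc _ (harg b t hbc.le ht.1 ht.2)
  rw [← hPdef]
  linarith
end
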